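/- arXiv:1401.5536 — 4 statements merged into one kernel-verified Lean document; each statement's English description precedes it below -/
import Mathlib

section
/- For every real s ≥ 1, with ε(s) = max(0, log₂((1/6)·ln s)/log₂ s) and N(s) = ⌊√(1+s^{1-ε(s)})⌋, the gap satisfies (1/2)·log₂(1+s) - max(0, log₂ N(s) - (1/2)·log₂(e/2) - 1) ≤ max(0, (1/2)·log₂((1/6)·ln s)) + (1/2)·log₂(8e). -/
open Real

/-- For `s ≥ 1`, with `ε(s) = max(0, log₂((1/6)ln s)/log₂ s)` and
`N(s) = ⌊√(1+s^(1-ε(s)))⌋`, the gap between Gaussian capacity and the PAM rate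
lower bound satisfies
`(1/2)log₂(1+s) - max(0, log₂ N(s) - (1/2)log₂(e/2) - 1)
  ≤ max(0, (1/2)log₂((1/6)ln s)) + (1/2)log₂(8e)`. -/
theorem pam_gap_loglog (s : ℝ) (hs : 1 ≤ s) :
    (1 / 2) * Real.logb 2 (1 + s) -
      max 0 (Real.logb 2
          (⌊Real.sqrt (1 + s ^ (1 - max 0
              (Real.logb 2 ((1 / 6) * Real.log s) / Real.logb 2 s)))⌋ : ℝ) -
        (1 / 2) * Real.logb 2 (Real.exp 1 / 2) - 1) ≤
    max 0 ((1 / 2) * Real.logb 2 ((1 / 6) * Real.log s)) +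
      (1 / 2) * Real.logb 2 (8 * Real.exp 1) := by
  have hs0 : (0:ℝ) < s := lt_of_lt_of_le one_pos hs
  set a := Real.logb 2 ((1 / 6) * Real.log s) with ha
  set b := Real.logb 2 s with hb
  set ε := max 0 (a / b) with hε
  have hε0 : 0 ≤ ε := le_max_left _ _
  have hx0 : (0:ℝ) < s ^ (1 - ε) := Real.rpow_pos_of_pos hs0 _
  set x := s ^ (1 - ε) with hx
  set T := Real.sqrt (1 + x) with hT
  have hT1 : (1:ℝ) ≤ T := by
    have h1 : Real.sqrt 1 ≤ T := Real.sqrt_le_sqrt (by linarith)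
    simpa using h1
  have hNfloor : (1:ℤ) ≤ ⌊T⌋ := Int.le_floor.mpr (by simpa using hT1)
  have hNfloorR : (1:ℝ) ≤ (⌊T⌋:ℝ) := by exact_mod_cast hNfloor
  have hN2 : T / 2 ≤ (⌊T⌋:ℝ) := by
    have h1 : T - 1 < (⌊T⌋:ℝ) := Int.sub_one_lt_floor T
    linarith
  have hN0 : (0:ℝ) < (⌊T⌋:ℝ) := by linarith
  have hT0 : (0:ℝ) < T := by linarith
  -- log N bound
  have hlogT : Real.logb 2 T = (1 / 2) * Real.logb 2 (1 + x) := by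
    rw [hT, Real.logb, Real.log_sqrt (by linarith), Real.logb]; ring
  have hlogN : (1 / 2) * Real.logb 2 (1 + x) - 1 ≤ Real.logb 2 (⌊T⌋:ℝ) := by
    have hmono : Real.logb 2 (T / 2) ≤ Real.logb 2 (⌊T⌋:ℝ) :=
      Real.logb_le_logb_of_le one_lt_two (by linarith) hN2
    have hdiv : Real.logb 2 (T / 2) = Real.logb 2 T - 1 := by
      rw [Real.logb_div (ne_of_gt hT0) (by norm_num),
        Real.logb_self_eq_one one_lt_two]
    rw [hdiv, hlogT] at hmono
    linarith
  -- key inequality A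
  have hA : (1 / 2) * Real.logb 2 (1 + s) ≤
      max 0 ((1 / 2) * a) + (1 / 2) * Real.logb 2 (1 + x) := by
    rcases le_or_gt (a / b) 0 with h | h
    · have hε' : ε = 0 := max_eq_left h
      have hx' : x = s := by rw [hx, hε', sub_zero, Real.rpow_one]
      rw [hx']
      have : (0:ℝ) ≤ max 0 ((1 / 2) * a) := le_max_left _ _
      linarith
    · have hbne : b ≠ 0 := by
        intro h0
        rw [h0, div_zero] at h
        exact lt_irrefl _ h
      have hb0 : 0 < b := lt_of_le_of_ne (Real.logb_nonneg one_lt_two hs) (Ne.symm hbne)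
      have ha0 : 0 < a := by
        have := mul_pos h hb0
        rwa [div_mul_cancel₀ _ hbne] at this
      have hεeq : ε = a / b := max_eq_right (le_of_lt h)
      set u := (1 / 6) * Real.log s with hu
      have hu0' : 0 ≤ u := by
        have := Real.log_nonneg hs
        rw [hu]; linarith
      have hu1 : 1 < u := by
        by_contra hc
        push_neg at hc
        exact absurd ha0 (not_lt.mpr (Real.logb_nonpos one_lt_two hu0' hc))
      have hu0 : 0 < u := by linarith
      -- s ^ ε = u
      have hsε : s ^ ε = u := by
        have h2a : (2:ℝ) ^ a = u := Real.rpow_logb two_pos (by norm_num) hu0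
        have h2b : (2:ℝ) ^ b = s := Real.rpow_logb two_pos (by norm_num) hs0
        calc s ^ ε = ((2:ℝ) ^ b) ^ (a / b) := by rw [h2b, hεeq]
          _ = (2:ℝ) ^ (b * (a / b)) := (Real.rpow_mul (by norm_num) b (a / b)).symm
          _ = (2:ℝ) ^ a := by rw [mul_div_cancel₀ _ hbne]
          _ = u := h2a
      -- 1 + s ≤ u * (1 + x)
      have hprod : 1 + s ≤ u * (1 + x) := by
        have hmul : u * x = s := by
          rw [← hsε, hx, ← Real.rpow_add hs0]
          norm_num
        nlinarith
      have hlog : Real.logb 2 (1 + s) ≤ Real.logb 2 (u * (1 + x)) :=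
        Real.logb_le_logb_of_le one_lt_two (by linarith) hprod
      rw [Real.logb_mul (ne_of_gt hu0) (by positivity)] at hlog
      have hmax : max 0 ((1 / 2) * a) = (1 / 2) * a :=
        max_eq_right (by linarith)
      rw [hmax]
      linarith [ha]
  -- constant identity
  have hconst : Real.logb 2 (8 * Real.exp 1) = Real.logb 2 (Real.exp 1 / 2) + 4 := by
    have he : (0:ℝ) < Real.exp 1 := Real.exp_pos 1
    have h16 : Real.logb 2 (16:ℝ) = 4 := by
      rw [show (16:ℝ) = 2 ^ (4:ℕ) by norm_num, Real.logb_pow,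
        Real.logb_self_eq_one one_lt_two]
      norm_num
    have : (8:ℝ) * Real.exp 1 = (Real.exp 1 / 2) * 16 := by ring
    rw [this, Real.logb_mul (by positivity) (by norm_num), h16]
  have hmax2 : Real.logb 2 (⌊T⌋:ℝ) - (1 / 2) * Real.logb 2 (Real.exp 1 / 2) - 1 ≤
      max 0 (Real.logb 2 (⌊T⌋:ℝ) - (1 / 2) * Real.logb 2 (Real.exp 1 / 2) - 1) :=
    le_max_right _ _
  linarith
end

section
/- For every real s ≥ 1, with ε(s) = max(0, log₂((1/6)·ln s)/log₂ s) and N(s) = ⌊√(1+s^{1-ε(s)})⌋, one has log₂(1 + (N(s)-1)·exp(-3s/(N(s)²-1))) ≤ 1 whenever N(s) ≥ 2. -/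
open Real

/-- For `s ≥ 1`, with `ε(s) = max(0, log₂((1/6)ln s)/log₂ s)` and
`N(s) = ⌊√(1+s^(1-ε(s)))⌋`, whenever `N(s) ≥ 2` one has
`log₂(1 + (N(s)-1)·exp(-3s/(N(s)²-1))) ≤ 1`. -/
theorem pam_penalty_le_one (s : ℝ) (hs : 1 ≤ s)
    (hN : 2 ≤ ⌊Real.sqrt (1 + s ^ (1 - max 0
        (Real.logb 2 ((1 / 6) * Real.log s) / Real.logb 2 s)))⌋) :
    Real.logb 2 (1 +
        ((⌊Real.sqrt (1 + s ^ (1 - max 0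
            (Real.logb 2 ((1 / 6) * Real.log s) / Real.logb 2 s)))⌋ : ℝ) - 1) *
        Real.exp (-3 * s /
          ((⌊Real.sqrt (1 + s ^ (1 - max 0
              (Real.logb 2 ((1 / 6) * Real.log s) / Real.logb 2 s)))⌋ : ℝ) ^ 2 - 1))) ≤ 1 := by
  set E := max 0 (Real.logb 2 ((1 / 6) * Real.log s) / Real.logb 2 s) with hEdef
  set n : ℝ := ((⌊Real.sqrt (1 + s ^ (1 - E))⌋ : ℤ) : ℝ) with hndef
  have hs0 : (0:ℝ) < s := by linarith
  have ht0 : 0 < s ^ (1 - E) := Real.rpow_pos_of_pos hs0 _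
  have hn2 : (2:ℝ) ≤ n := by rw [hndef]; exact_mod_cast hN
  have hfloor : n ≤ Real.sqrt (1 + s ^ (1 - E)) := Int.floor_le _
  have hsq : n ^ 2 ≤ 1 + s ^ (1 - E) := by
    have h := Real.sq_sqrt (by positivity : (0:ℝ) ≤ 1 + s ^ (1 - E))
    nlinarith [Real.sqrt_nonneg (1 + s ^ (1 - E))]
  have hc : n ^ 2 - 1 ≤ s ^ (1 - E) := by linarith
  have hcpos : 0 < n ^ 2 - 1 := by nlinarith
  have hE0 : 0 ≤ E := le_max_left _ _
  have hts : s ^ (1 - E) ≤ s := by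
    calc s ^ (1 - E) ≤ s ^ (1:ℝ) :=
          Real.rpow_le_rpow_of_exponent_le hs (by linarith)
      _ = s := Real.rpow_one s
  -- exponential bound
  have hSE : s ^ E = s / s ^ (1 - E) := by
    rw [eq_div_iff (ne_of_gt ht0), ← Real.rpow_add hs0]
    rw [show E + (1 - E) = 1 by ring, Real.rpow_one]
  have hexp : Real.exp (-3 * s / (n ^ 2 - 1)) ≤ Real.exp (-(3 * s ^ E)) := by
    apply Real.exp_le_exp.2
    have hr : s / s ^ (1 - E) * s ^ (1 - E) = s := div_mul_cancel₀ s (ne_of_gt ht0)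
    rw [hSE, div_le_iff₀ hcpos]
    nlinarith [div_pos hs0 ht0, hr, hc]
  -- main bound : n - 1 ≤ exp (3 * s ^ E)
  have hbound : n - 1 ≤ Real.exp (3 * s ^ E) := by
    rcases le_or_gt (Real.logb 2 ((1 / 6) * Real.log s) / Real.logb 2 s) 0 with hle | hlt
    · -- E = 0
      have hE : E = 0 := max_eq_left hle
      have hls : Real.log s ≤ 6 := by
        rcases le_or_gt (Real.logb 2 s) 0 with h2 | h2
        · have : Real.log s ≤ 0 := by
            by_contra h
            push_neg at h
            have : 0 < Real.logb 2 s := Real.logb_pos one_lt_two (by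
              nlinarith [Real.exp_log hs0, Real.add_one_le_exp (Real.log s)])
            linarith
          linarith
        · have hnum : Real.logb 2 ((1 / 6) * Real.log s) ≤ 0 := by
            by_contra h
            push_neg at h
            have : 0 < Real.logb 2 ((1 / 6) * Real.log s) / Real.logb 2 s :=
              div_pos h h2
            linarith
          by_contra h
          push_neg at h
          have : 0 < Real.logb 2 ((1 / 6) * Real.log s) :=
            Real.logb_pos one_lt_two (by linarith)
          linarith
      have hsle : s ≤ Real.exp 6 := by
        calc s = Real.exp (Real.log s) := (Real.exp_log hs0).symm
          _ ≤ Real.exp 6 := Real.exp_le_exp.2 hls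
      have h6 : Real.exp 6 = Real.exp 3 * Real.exp 3 := by
        rw [← Real.exp_add]; norm_num
      have hsq' : n ^ 2 ≤ 1 + s := by
        rw [hE] at hsq; simpa using hsq
      have hn3 : n ≤ Real.exp 3 + 1 := by
        nlinarith [Real.exp_pos 3]
      rw [hE, Real.rpow_zero]
      norm_num
      linarith
    · -- E = ratio > 0
      have hE : E = Real.logb 2 ((1 / 6) * Real.log s) / Real.logb 2 s :=
        max_eq_right hlt.le
      have hs1 : 1 < s := by
        rcases eq_or_lt_of_le hs with h | h
        · exfalso
          rw [← h] at hlt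
          simp [Real.logb] at hlt
        · exact h
      have hlogs : 0 < Real.log s := Real.log_pos hs1
      have hval : s ^ E = (1 / 6) * Real.log s := by
        rw [Real.rpow_def_of_pos hs0, hE]
        have : Real.log s * (Real.logb 2 ((1 / 6) * Real.log s) / Real.logb 2 s)
            = Real.log ((1 / 6) * Real.log s) := by
          rw [Real.logb, Real.logb]
          field_simp
        rw [this, Real.exp_log (by positivity)]
      have hexpeq : Real.exp (3 * s ^ E) = Real.sqrt s := by
        rw [hval, show (3:ℝ) * ((1/6) * Real.log s) = Real.log s / 2 by ring]
        rw [Real.sqrt_eq_rpow, Real.rpow_def_of_pos hs0]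
        ring_nf
      rw [hexpeq]
      have h1s : n ^ 2 ≤ 1 + s := by linarith
      nlinarith [Real.sq_sqrt hs0.le, Real.sqrt_nonneg s]
  -- combine
  have hprod : (n - 1) * Real.exp (-3 * s / (n ^ 2 - 1)) ≤ 1 := by
    calc (n - 1) * Real.exp (-3 * s / (n ^ 2 - 1))
        ≤ Real.exp (3 * s ^ E) * Real.exp (-(3 * s ^ E)) :=
          mul_le_mul hbound hexp (Real.exp_pos _).le (Real.exp_pos _).le
      _ = 1 := by rw [← Real.exp_add]; simp
  have hpos : 0 < 1 + (n - 1) * Real.exp (-3 * s / (n ^ 2 - 1)) := by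
    have := (Real.exp_pos (-3 * s / (n ^ 2 - 1))).le
    nlinarith
  calc Real.logb 2 (1 + (n - 1) * Real.exp (-3 * s / (n ^ 2 - 1)))
      ≤ Real.logb 2 2 :=
        Real.logb_le_logb_of_le one_lt_two hpos (by linarith)
    _ = 1 := Real.logb_self_eq_one one_lt_two
end

section
/- Fix α ≥ 0 and ε with 0 < ε ≤ min(1, |α - 1|) when α ≠ 1 (and set β = min(1, |α-1|) - ε ≥ 0). Define d₁ = β (valid since 1 - β > 0), d₂ = (β if α - 1 - β > 0 else 0) + 1 - min(β, α), and the sum constraint d₁ + d₂ ≤ (β if 1 - α - β > 0 else 0) + α. Then the achievable sum gDoF max over these constraints equals 1 - ε for 0 ≤ α < 1, α - ε for 1 ≤ α < 2, and 2 - ε for α ≥ 2. -/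
/-- gDoF evaluation for the G-IC-OR: with `β = min(1,|α-1|) - ε` (where
`0 < ε ≤ min(1,|α-1|)`), `d₁ = β`,
`d₂ = (β if α-1-β > 0 else 0) + 1 - min(β,α)`, and the sum constraint
`(β if 1-α-β > 0 else 0) + α`, the achievable sum gDoF
`min(d₁+d₂, sum constraint)` equals `1-ε` for `0 ≤ α < 1`, `α-ε` for
`1 ≤ α < 2`, and `2-ε` for `α ≥ 2`. -/
theorem gicor_sum_gdof (α ε : ℝ) (hα : 0 ≤ α)
    (hε0 : 0 < ε) (hε1 : ε ≤ min 1 |α - 1|) :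
    let β := min 1 |α - 1| - ε
    let d₁ := β
    let d₂ := (if α - 1 - β > 0 then β else 0) + 1 - min β α
    let sumBound := (if 1 - α - β > 0 then β else 0) + α
    (0 ≤ β) ∧
    (α < 1 → min (d₁ + d₂) sumBound = 1 - ε) ∧
    (1 ≤ α → α < 2 → min (d₁ + d₂) sumBound = α - ε) ∧
    (2 ≤ α → min (d₁ + d₂) sumBound = 2 - ε) := by
  intro β d₁ d₂ sumBound
  obtain ⟨he1, hea⟩ := le_min_iff.mp hε1
  have hβdef : β = min 1 |α - 1| - ε := rfl
  have hβ0 : 0 ≤ β := by rw [hβdef]; linarith [le_min he1 hea]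
  refine ⟨hβ0, ?_, ?_, ?_⟩
  · intro h1
    have habs : |α - 1| = 1 - α := by
      rw [abs_sub_comm, abs_of_nonneg (by linarith)]
    have hβeq : β = 1 - α - ε := by
      rw [hβdef, habs, min_eq_right (by linarith)]
    have hd₂ : d₂ = 1 - min β α := by
      unfold d₂
      rw [if_neg (by push_neg; linarith)]
      ring
    have hsb : sumBound = β + α := by
      unfold sumBound
      rw [if_pos (by linarith)]
    have hd₁ : d₁ = β := rfl
    rw [hd₁, hd₂, hsb,
      min_eq_right (by have := min_le_left β α; linarith)]
    linarith
  · intro h1 h2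
    have h1lt : 1 < α := by
      rcases lt_or_eq_of_le h1 with h | h
      · exact h
      · exfalso; rw [← h] at hea; simp at hea; linarith
    have habs : |α - 1| = α - 1 := abs_of_nonneg (by linarith)
    have hβeq : β = α - 1 - ε := by
      rw [hβdef, habs, min_eq_right (by linarith)]
    have hd₂ : d₂ = β + 1 - min β α := by
      unfold d₂
      rw [if_pos (by linarith)]
    have hmin : min β α = β := min_eq_left (by linarith)
    have hsb : sumBound = α := by
      unfold sumBound
      rw [if_neg (by push_neg; linarith)]
      ring
    have hd₁ : d₁ = β := rfl
    rw [hd₁, hd₂, hmin, hsb, min_eq_left (by linarith)]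
    linarith
  · intro h2
    have habs : |α - 1| = α - 1 := abs_of_nonneg (by linarith)
    have hβeq : β = 1 - ε := by
      rw [hβdef, habs, min_eq_left (by linarith)]
    have hd₂ : d₂ = β + 1 - min β α := by
      unfold d₂
      rw [if_pos (by linarith)]
    have hmin : min β α = β := min_eq_left (by linarith)
    have hsb : sumBound = α := by
      unfold sumBound
      rw [if_neg (by push_neg; linarith)]
      ring
    have hd₁ : d₁ = β := rfl
    rw [hd₁, hd₂, hmin, hsb, min_eq_left (by linarith)]
    linarith
end

section
/- Let s₁,…,s_N be distinct reals with minimum distance d_min > 0, let γ ≥ 0, and suppose the Gaussian mixture density P_Y(y) = Σ_i p_i·N(y; √γ s_i, 1) has well-defined differential entropy h(Y) = -∫ P_Y log₂ P_Y dy. If the weights are arbitrary probabilities p_i, then h(Y) ≥ log₂(√(4π)) - log₂(Σ_i p_i² + (1 - Σ_i p_i²)·exp(-γ d_min²/4)); in particular for uniform weights p_i = 1/N, h(Y) ≥ log₂(N√(4π)) - log₂(1 + (N-1)·exp(-γ d_min²/4)). -/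
open Real MeasureTheory Finset

lemma gauss_integrable (a : ℝ) :
    Integrable (fun y : ℝ => (1 / Real.sqrt (2 * π)) * Real.exp (-(y - a) ^ 2 / 2)) := by
  have h := (integrable_exp_neg_mul_sq (b := (1:ℝ)/2) (by norm_num)).comp_sub_right a
  have h2 : (fun y : ℝ => Real.exp (-(1/2) * (y - a)^2)) =
      fun y : ℝ => Real.exp (-(y - a) ^ 2 / 2) := by
    funext y; ring_nf
  exact ((h2 ▸ h).const_mul _)

lemma gauss_integral (a : ℝ) :
    ∫ y : ℝ, (1 / Real.sqrt (2 * π)) * Real.exp (-(y - a) ^ 2 / 2) = 1 := by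
  rw [integral_const_mul]
  have h : ∫ y : ℝ, Real.exp (-(y - a) ^ 2 / 2)
      = ∫ y : ℝ, Real.exp (-(1/2) * y ^ 2) := by
    rw [← integral_sub_right_eq_self (fun y => Real.exp (-(1/2) * y ^ 2)) a]
    congr 1; funext y; ring_nf
  rw [h, integral_gaussian]
  have : π / (1/2) = 2 * π := by ring
  rw [this]
  rw [one_div, inv_mul_cancel₀ (by positivity)]

lemma gauss_prod_eq (a b : ℝ) : (fun y : ℝ =>
    ((1 / Real.sqrt (2 * π)) * Real.exp (-(y - a) ^ 2 / 2)) *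
    ((1 / Real.sqrt (2 * π)) * Real.exp (-(y - b) ^ 2 / 2))) =
    fun y : ℝ => (Real.exp (-(a - b) ^ 2 / 4) / (2 * π)) *
      Real.exp (-(y - (a + b)/2) ^ 2) := by
  funext y
  have hsq : Real.sqrt (2 * π) * Real.sqrt (2 * π) = 2 * π :=
    Real.mul_self_sqrt (by positivity)
  have key : Real.exp (-(y - a) ^ 2 / 2) * Real.exp (-(y - b) ^ 2 / 2)
      = Real.exp (-(a - b) ^ 2 / 4) * Real.exp (-(y - (a + b)/2) ^ 2) := by
    rw [← Real.exp_add, ← Real.exp_add]; congr 1; ring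
  have step : 1 / Real.sqrt (2 * π) * Real.exp (-(y - a) ^ 2 / 2) *
      (1 / Real.sqrt (2 * π) * Real.exp (-(y - b) ^ 2 / 2))
      = (Real.exp (-(y - a) ^ 2 / 2) * Real.exp (-(y - b) ^ 2 / 2))
        / (Real.sqrt (2 * π) * Real.sqrt (2 * π)) := by ring
  rw [step, hsq, key]
  ring

lemma gauss_sq_integrable (a b : ℝ) :
    Integrable (fun y : ℝ =>
    ((1 / Real.sqrt (2 * π)) * Real.exp (-(y - a) ^ 2 / 2)) *
    ((1 / Real.sqrt (2 * π)) * Real.exp (-(y - b) ^ 2 / 2))) := by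
  rw [gauss_prod_eq]
  have h := (integrable_exp_neg_mul_sq (b := (1:ℝ)) (by norm_num)).comp_sub_right ((a+b)/2)
  have h2 : (fun y : ℝ => Real.exp (-(1:ℝ) * (y - (a+b)/2)^2)) =
      fun y : ℝ => Real.exp (-(y - (a+b)/2) ^ 2) := by funext y; ring_nf
  exact ((h2 ▸ h).const_mul _)

lemma gauss_prod_integral (a b : ℝ) :
    ∫ y : ℝ, ((1 / Real.sqrt (2 * π)) * Real.exp (-(y - a) ^ 2 / 2)) *
      ((1 / Real.sqrt (2 * π)) * Real.exp (-(y - b) ^ 2 / 2))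
    = (1 / Real.sqrt (4 * π)) * Real.exp (-(a - b) ^ 2 / 4) := by
  rw [gauss_prod_eq, integral_const_mul]
  have h : ∫ y : ℝ, Real.exp (-(y - (a+b)/2) ^ 2)
      = ∫ y : ℝ, Real.exp (-(1:ℝ) * y ^ 2) := by
    rw [← integral_sub_right_eq_self (fun y => Real.exp (-(1:ℝ) * y ^ 2)) ((a+b)/2)]
    congr 1; funext y; ring_nf
  rw [h, integral_gaussian]
  have h4 : Real.sqrt (4 * π) = 2 * Real.sqrt π := by
    rw [show (4:ℝ) * π = 2^2 * π by ring, Real.sqrt_mul (by positivity), Real.sqrt_sq (by norm_num)]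
  have hsp : Real.sqrt (π / 1) = Real.sqrt π := by norm_num
  rw [hsp, h4]
  have hπ : Real.sqrt π * Real.sqrt π = π := Real.mul_self_sqrt pi_pos.le
  have hne : Real.sqrt π ≠ 0 := by positivity
  field_simp
  nlinarith [Real.exp_pos (-(a-b)^2/4)]

/-- Entropy lower bound for a Gaussian mixture output
`P_Y(y) = Σ_i p_i N(y; √γ s_i, 1)` (means distinct, minimum distance
`d_min > 0`, probability weights `p`), assuming the entropy integral exists:
`h(Y) = -∫ P_Y log₂ P_Y ≥ log₂ √(4π) - log₂(Σ p_i² + (1-Σ p_i²)e^{-γ d_min²/4})`;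
in particular for uniform weights `p_i = 1/N`,
`h(Y) ≥ log₂(N√(4π)) - log₂(1 + (N-1)e^{-γ d_min²/4})`. -/
theorem gaussian_mixture_entropy_bound (N : ℕ) (hN : 1 ≤ N)
    (s p : Fin N → ℝ) (dmin γ : ℝ) (hγ : 0 ≤ γ) (hdmin_pos : 0 < dmin)
    (hdmin : ∀ i j : Fin N, i ≠ j → dmin ≤ |s i - s j|)
    (hp_nonneg : ∀ i, 0 ≤ p i) (hp_sum : ∑ i, p i = 1)
    (PY : ℝ → ℝ)
    (hPY : PY = fun y => ∑ i, p i * ((1 / Real.sqrt (2 * π)) *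
      Real.exp (-(y - Real.sqrt γ * s i) ^ 2 / 2)))
    (hEnt_int : Integrable (fun y => PY y * Real.logb 2 (PY y))) :
    (-∫ y : ℝ, PY y * Real.logb 2 (PY y)) ≥
      Real.logb 2 (Real.sqrt (4 * π)) -
        Real.logb 2 ((∑ i, (p i) ^ 2) +
          (1 - ∑ i, (p i) ^ 2) * Real.exp (-γ * dmin ^ 2 / 4)) ∧
    ((∀ i, p i = 1 / N) →
      (-∫ y : ℝ, PY y * Real.logb 2 (PY y)) ≥
        Real.logb 2 ((N : ℝ) * Real.sqrt (4 * π)) -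
          Real.logb 2 (1 + ((N : ℝ) - 1) * Real.exp (-γ * dmin ^ 2 / 4))) := by
  set E : ℝ := Real.exp (-γ * dmin ^ 2 / 4) with hE
  have hE_pos : 0 < E := Real.exp_pos _
  set G : Fin N → ℝ → ℝ := fun i y => (1 / Real.sqrt (2 * π)) *
      Real.exp (-(y - Real.sqrt γ * s i) ^ 2 / 2) with hG
  have hG_pos : ∀ i y, 0 < G i y := fun i y => by
    simp only [hG]; positivity
  -- existence of a positive weight
  obtain ⟨i0, -, hi0⟩ : ∃ i ∈ Finset.univ, (0:ℝ) < p i := by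
    apply Finset.exists_lt_of_sum_lt (f := fun _ => (0:ℝ))
    simp [hp_sum]
  have hpos : ∀ y, 0 < PY y := by
    intro y
    rw [hPY]
    apply Finset.sum_pos' (fun i _ => mul_nonneg (hp_nonneg i) (hG_pos i y).le)
    exact ⟨i0, Finset.mem_univ _, mul_pos hi0 (hG_pos i0 y)⟩
  -- integrability of PY and PY²
  have hgint : ∀ i, Integrable (fun y => p i * G i y) := fun i =>
    (gauss_integrable _).const_mul _
  have hintP : Integrable PY := by
    rw [hPY]; exact integrable_finset_sum _ (fun i _ => hgint i)
  have hintP1 : ∫ y : ℝ, PY y = 1 := by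
    rw [hPY, integral_finset_sum _ (fun i _ => hgint i)]
    have : ∀ i : Fin N, ∫ y : ℝ, p i * G i y = p i := by
      intro i; rw [integral_const_mul, gauss_integral, mul_one]
    simp only [this]; exact hp_sum
  have hexp2 : (fun y => PY y * PY y) =
      fun y => ∑ i, ∑ j, (p i * p j) * (G i y * G j y) := by
    funext y
    rw [hPY]
    rw [Finset.sum_mul_sum]
    refine Finset.sum_congr rfl fun i _ => Finset.sum_congr rfl fun j _ => by ring
  have hintP2 : Integrable (fun y => PY y * PY y) := by
    rw [hexp2]
    exact integrable_finset_sum _ (fun i _ => integrable_finset_sum _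
      (fun j _ => (gauss_sq_integrable _ _).const_mul _))
  set c : ℝ := ∫ y : ℝ, PY y * PY y with hcdef
  have hc : c = (1 / Real.sqrt (4 * π)) *
      ∑ i, ∑ j, (p i * p j) *
        Real.exp (-(Real.sqrt γ * s i - Real.sqrt γ * s j) ^ 2 / 4) := by
    rw [hcdef, hexp2,
      integral_finset_sum _ (fun i _ => integrable_finset_sum _
        (fun j _ => (gauss_sq_integrable _ _).const_mul _))]
    rw [Finset.mul_sum]
    refine Finset.sum_congr rfl fun i _ => ?_
    rw [integral_finset_sum _ (fun j _ => (gauss_sq_integrable _ _).const_mul _),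
      Finset.mul_sum]
    refine Finset.sum_congr rfl fun j _ => ?_
    rw [integral_const_mul, gauss_prod_integral]
    ring
  have hc_pos : 0 < c := by
    rw [hc]
    apply mul_pos (by positivity)
    apply Finset.sum_pos' (fun i _ => Finset.sum_nonneg (fun j _ =>
      mul_nonneg (mul_nonneg (hp_nonneg i) (hp_nonneg j)) (Real.exp_pos _).le))
    refine ⟨i0, Finset.mem_univ _, ?_⟩
    apply Finset.sum_pos' (fun j _ =>
      mul_nonneg (mul_nonneg (hp_nonneg i0) (hp_nonneg j)) (Real.exp_pos _).le)
    exact ⟨i0, Finset.mem_univ _, by positivity⟩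
  -- bound the double sum
  set Sp : ℝ := ∑ i, (p i) ^ 2 with hSp
  have hSp_pos : 0 < Sp := by
    rw [hSp]
    apply Finset.sum_pos' (fun i _ => sq_nonneg _)
    exact ⟨i0, Finset.mem_univ _, by positivity⟩
  have hp_le_one : ∀ i, p i ≤ 1 := by
    intro i
    rw [← hp_sum]
    exact Finset.single_le_sum (fun j _ => hp_nonneg j) (Finset.mem_univ i)
  have hSp_le : Sp ≤ 1 := by
    rw [hSp, ← hp_sum]
    exact Finset.sum_le_sum fun i _ => by
      have := hp_nonneg i; have := hp_le_one i; nlinarith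
  set B : ℝ := Sp + (1 - Sp) * E with hB
  have hB_pos : 0 < B := by
    rw [hB]
    have : 0 ≤ (1 - Sp) * E := mul_nonneg (by linarith) hE_pos.le
    linarith
  have hsum_le : ∑ i, ∑ j, (p i * p j) *
      Real.exp (-(Real.sqrt γ * s i - Real.sqrt γ * s j) ^ 2 / 4) ≤ B := by
    have hterm : ∀ i j : Fin N, (p i * p j) *
        Real.exp (-(Real.sqrt γ * s i - Real.sqrt γ * s j) ^ 2 / 4) ≤
        p i * p j * E + (if j = i then (p i)^2 * (1 - E) else 0) := by
      intro i j
      by_cases hij : j = i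
      · subst hij
        simp only [eq_self_iff_true, if_true, sub_self]
        rw [show (-(0:ℝ) ^ 2) / 4 = 0 by norm_num, Real.exp_zero]
        exact le_of_eq (by ring)
      · simp only [hij, if_false, add_zero]
        apply mul_le_mul_of_nonneg_left _ (mul_nonneg (hp_nonneg i) (hp_nonneg j))
        rw [hE]
        apply Real.exp_le_exp.mpr
        have h1 : (Real.sqrt γ * s i - Real.sqrt γ * s j) ^ 2 = γ * (s i - s j) ^ 2 := by
          rw [← mul_sub, mul_pow, Real.sq_sqrt hγ]
        have h2 : dmin ^ 2 ≤ (s i - s j) ^ 2 := by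
          have hd := hdmin i j (fun h => hij (by rw [h]))
          have := sq_abs (s i - s j)
          nlinarith [abs_nonneg (s i - s j)]
        have h3 : γ * dmin ^ 2 ≤ γ * (s i - s j) ^ 2 :=
          mul_le_mul_of_nonneg_left h2 hγ
        rw [h1]; linarith
    calc ∑ i, ∑ j, (p i * p j) *
        Real.exp (-(Real.sqrt γ * s i - Real.sqrt γ * s j) ^ 2 / 4)
        ≤ ∑ i, ∑ j, (p i * p j * E + (if j = i then (p i)^2 * (1 - E) else 0)) :=
          Finset.sum_le_sum fun i _ => Finset.sum_le_sum fun j _ => hterm i j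
      _ = B := by
          rw [hB]
          have hinner : ∀ i : Fin N, ∑ j, (p i * p j * E +
              (if j = i then (p i)^2 * (1 - E) else 0))
              = p i * E + (p i)^2 * (1 - E) := by
            intro i
            rw [Finset.sum_add_distrib]
            congr 1
            · have : ∀ j : Fin N, p i * p j * E = (p i * E) * p j := fun j => by ring
              simp only [this]
              rw [← Finset.mul_sum, hp_sum, mul_one]
            · simp
          rw [Finset.sum_congr rfl (fun i _ => hinner i), Finset.sum_add_distrib]
          rw [← Finset.sum_mul, hp_sum, ← Finset.sum_mul, ← hSp]
          ring
  have hcB : c ≤ (1 / Real.sqrt (4 * π)) * B := by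
    rw [hc]
    exact mul_le_mul_of_nonneg_left hsum_le (by positivity)
  have hlog2 : (0:ℝ) < Real.log 2 := Real.log_pos (by norm_num)
  have hEnt_log : Integrable (fun y => PY y * Real.log (PY y)) := by
    have heq : (fun y => PY y * Real.log (PY y)) =
        fun y => Real.log 2 * (PY y * Real.logb 2 (PY y)) := by
      funext y
      rw [Real.logb]
      field_simp
    rw [heq]
    exact hEnt_int.const_mul _
  have hpt : ∀ y, PY y * Real.log (PY y) ≤
      PY y * Real.log c + (PY y * PY y) * (1/c) - PY y := by
    intro y
    have h1 : Real.log (PY y / c) ≤ PY y / c - 1 :=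
      Real.log_le_sub_one_of_pos (div_pos (hpos y) hc_pos)
    rw [Real.log_div (ne_of_gt (hpos y)) (ne_of_gt hc_pos)] at h1
    have h2 := mul_le_mul_of_nonneg_left h1 (hpos y).le
    have h3 : PY y / c = PY y * (1/c) := by ring
    rw [h3] at h2
    nlinarith [hpos y]
  have hRHS_int : Integrable (fun y =>
      PY y * Real.log c + (PY y * PY y) * (1/c) - PY y) :=
    ((hintP.mul_const _).add (hintP2.mul_const _)).sub hintP
  have hRHS_val : ∫ y : ℝ, (PY y * Real.log c + (PY y * PY y) * (1/c) - PY y)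
      = Real.log c := by
    have hI1 : Integrable (fun y => PY y * Real.log c) volume := hintP.mul_const _
    have hI2 : Integrable (fun y => PY y * PY y * (1/c)) volume := hintP2.mul_const _
    have hI12 : Integrable (fun y => PY y * Real.log c + PY y * PY y * (1/c)) volume :=
      hI1.add hI2
    rw [integral_sub hI12 hintP, integral_add hI1 hI2,
      integral_mul_const, integral_mul_const, hintP1, ← hcdef, one_mul,
      mul_one_div, div_self (ne_of_gt hc_pos)]
    ring
  have hkey : ∫ y : ℝ, PY y * Real.log (PY y) ≤ Real.log c := by
    calc ∫ y : ℝ, PY y * Real.log (PY y)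
        ≤ ∫ y : ℝ, (PY y * Real.log c + (PY y * PY y) * (1/c) - PY y) :=
          integral_mono hEnt_log hRHS_int hpt
      _ = Real.log c := hRHS_val
  have hlogb_int : ∫ y : ℝ, PY y * Real.logb 2 (PY y)
      = (∫ y : ℝ, PY y * Real.log (PY y)) / Real.log 2 := by
    rw [← integral_div]
    congr 1
    funext y
    rw [Real.logb]
    ring
  have h5 : ∫ y : ℝ, PY y * Real.logb 2 (PY y) ≤ Real.logb 2 c := by
    rw [hlogb_int, Real.logb]
    gcongr
  have h6 : Real.logb 2 c ≤ Real.logb 2 B - Real.logb 2 (Real.sqrt (4 * π)) := by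
    have h7 : Real.logb 2 c ≤ Real.logb 2 (B / Real.sqrt (4 * π)) := by
      apply (Real.logb_le_logb (by norm_num) hc_pos (by positivity)).mpr
      calc c ≤ (1 / Real.sqrt (4 * π)) * B := hcB
        _ = B / Real.sqrt (4 * π) := by ring
    rwa [Real.logb_div (ne_of_gt hB_pos) (by positivity)] at h7
  have main : (-∫ y : ℝ, PY y * Real.logb 2 (PY y)) ≥
      Real.logb 2 (Real.sqrt (4 * π)) - Real.logb 2 B := by
    linarith
  refine ⟨main, fun hp => ?_⟩
  have hNpos : (0:ℝ) < N := by
    have : 0 < N := hN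
    exact_mod_cast this
  have hSpN : Sp = 1 / N := by
    rw [hSp]
    simp only [hp]
    rw [Finset.sum_const, Finset.card_univ, Fintype.card_fin, nsmul_eq_mul]
    field_simp
  have hN1 : (1:ℝ) ≤ N := by exact_mod_cast hN
  have hX_pos : 0 < 1 + ((N:ℝ) - 1) * E := by
    have h9 : 0 ≤ ((N:ℝ) - 1) * E := mul_nonneg (by linarith) hE_pos.le
    linarith
  have hBX : B = (1 + ((N:ℝ) - 1) * E) / N := by
    rw [hB, hSpN, eq_div_iff (ne_of_gt hNpos)]
    field_simp
  have hlogB : Real.logb 2 B =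
      Real.logb 2 (1 + ((N:ℝ) - 1) * E) - Real.logb 2 (N : ℝ) := by
    rw [hBX, Real.logb_div (ne_of_gt hX_pos) (ne_of_gt hNpos)]
  have hlogN : Real.logb 2 ((N : ℝ) * Real.sqrt (4 * π)) =
      Real.logb 2 (N : ℝ) + Real.logb 2 (Real.sqrt (4 * π)) :=
    Real.logb_mul (ne_of_gt hNpos) (by positivity)
  rw [hlogN]
  linarith
end
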